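/- Let q ≥ 1 be a positive integer and x a real number. There exists a largest s ∈ {0, 1, ..., q-1} such that round(x - s/q) = round(x), where round denotes rounding to the nearest integer; moreover for every integer t, round(x - t/q) equals either round(x) - ⌊t/q⌋ or round(x) - ⌊t/q⌋ - 1, the first case occurring exactly when (t mod q) ≤ s. -/

import Mathlib

theorem stmt16 (q : ℤ) (hq : 1 ≤ q) (x : ℝ) :
    ∃ s : ℤ, 0 ≤ s ∧ s < q ∧
      round (x - (s : ℝ)/(q : ℝ)) = round x ∧
      (∀ s' : ℤ, 0 ≤ s' → s' < q →
        round (x - (s' : ℝ)/(q : ℝ)) = round x → s' ≤ s) ∧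
      ∀ t : ℤ,
        (round (x - (t : ℝ)/(q : ℝ)) = round x - ⌊(t : ℝ)/(q : ℝ)⌋ ∨
         round (x - (t : ℝ)/(q : ℝ)) = round x - ⌊(t : ℝ)/(q : ℝ)⌋ - 1) ∧
        (round (x - (t : ℝ)/(q : ℝ)) = round x - ⌊(t : ℝ)/(q : ℝ)⌋ ↔ t % q ≤ s) := by
  have hq0 : (0:ℤ) < q := by omega
  have hqR : (0:ℝ) < (q:ℝ) := by exact_mod_cast hq0
  set f : ℝ := Int.fract (x + 1/2) with hfdef
  have hf0 : 0 ≤ f := Int.fract_nonneg _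
  have hf1 : f < 1 := Int.fract_lt_one _
  set s : ℤ := ⌊(q:ℝ) * f⌋ with hsdef
  have hs0 : 0 ≤ s := Int.floor_nonneg.mpr (by positivity)
  have hsq : s < q := Int.floor_lt.mpr (by nlinarith)
  have hfl : ∀ t : ℤ, ((t:ℝ)/(q:ℝ)) = ((t / q : ℤ) : ℝ) + ((t % q : ℤ) : ℝ)/(q:ℝ) := by
    intro t
    have ht : (q * (t / q) + t % q : ℤ) = t := Int.mul_ediv_add_emod t q
    have htR : (t:ℝ) = (q:ℝ) * ((t / q : ℤ):ℝ) + ((t % q : ℤ):ℝ) := by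
      exact_mod_cast ht.symm
    rw [htR]; field_simp
  have hfloor_div : ∀ t : ℤ, ⌊(t:ℝ)/(q:ℝ)⌋ = t / q := by
    intro t
    have hr0 : 0 ≤ t % q := Int.emod_nonneg t (by omega)
    have hrq : t % q < q := Int.emod_lt_of_pos t hq0
    have hr0R : (0:ℝ) ≤ ((t % q : ℤ):ℝ) := by exact_mod_cast hr0
    have hrqR : ((t % q : ℤ):ℝ) < (q:ℝ) := by exact_mod_cast hrq
    rw [hfl t, Int.floor_intCast_add]
    have : ⌊((t % q : ℤ):ℝ)/(q:ℝ)⌋ = 0 := by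
      apply Int.floor_eq_zero_iff.mpr
      rw [Set.mem_Ico]
      constructor
      · positivity
      · rw [div_lt_one hqR] at *; linarith
    omega
  have hcase : ∀ r : ℤ, 0 ≤ r → r < q →
      ⌊f - ((r:ℤ):ℝ)/(q:ℝ)⌋ = if r ≤ s then 0 else -1 := by
    intro r hr0 hrq
    have hr0R : (0:ℝ) ≤ (r:ℝ) := by exact_mod_cast hr0
    have hrqR : (r:ℝ) < (q:ℝ) := by exact_mod_cast hrq
    split_ifs with h
    · have h1 : (r:ℝ) ≤ (q:ℝ) * f := by exact_mod_cast Int.le_floor.mp h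
      have h2 : (r:ℝ)/(q:ℝ) ≤ f := (div_le_iff₀ hqR).mpr (by linarith)
      apply Int.floor_eq_zero_iff.mpr
      rw [Set.mem_Ico]
      have hge : (r:ℝ)/(q:ℝ) ≥ 0 := by positivity
      exact ⟨by linarith, by linarith⟩
    · push_neg at h
      have h1 : (q:ℝ) * f < (r:ℝ) := by
        have := Int.lt_floor_add_one ((q:ℝ) * f)
        have : ((s:ℤ):ℝ) + 1 ≤ (r:ℝ) := by exact_mod_cast h
        have := Int.lt_floor_add_one ((q:ℝ) * f)
        linarith
      have h2 : f < (r:ℝ)/(q:ℝ) := (lt_div_iff₀ hqR).mpr (by linarith)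
      have h3 : (r:ℝ)/(q:ℝ) < 1 := (div_lt_one hqR).mpr hrqR
      have : ⌊f - (r:ℝ)/(q:ℝ)⌋ = -1 := by
        apply Int.floor_eq_iff.mpr
        constructor
        · push_cast; linarith
        · push_cast; linarith
      exact_mod_cast this
  have main : ∀ t : ℤ,
      round (x - (t:ℝ)/(q:ℝ)) = round x - t / q + (if t % q ≤ s then 0 else -1) := by
    intro t
    have hr0 : 0 ≤ t % q := Int.emod_nonneg t (by omega)
    have hrq : t % q < q := Int.emod_lt_of_pos t hq0
    rw [round_eq, round_eq, hfl t]
    have he : x - (((t / q : ℤ):ℝ) + ((t % q : ℤ):ℝ)/(q:ℝ)) + 1/2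
        = (x + 1/2 - ((t % q : ℤ):ℝ)/(q:ℝ)) - ((t / q : ℤ):ℝ) := by ring
    rw [he, Int.floor_sub_intCast]
    have hx : x + 1/2 - ((t % q : ℤ):ℝ)/(q:ℝ)
        = ((⌊x + 1/2⌋:ℤ):ℝ) + (f - ((t % q : ℤ):ℝ)/(q:ℝ)) := by
      rw [hfdef, Int.fract]; ring
    rw [hx, Int.floor_intCast_add, hcase (t % q) hr0 hrq]
    split_ifs <;> omega
  refine ⟨s, hs0, hsq, ?_, ?_, ?_⟩
  · have := main s
    have h1 : s % q = s := Int.emod_eq_of_lt hs0 hsq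
    have h2 : s / q = 0 := Int.ediv_eq_zero_of_lt hs0 hsq
    rw [h1, h2] at this
    simp only [le_refl, if_pos] at this
    omega
  · intro s' h0 h1 hr
    have := main s'
    have e1 : s' % q = s' := Int.emod_eq_of_lt h0 h1
    have e2 : s' / q = 0 := Int.ediv_eq_zero_of_lt h0 h1
    rw [e1, e2, hr] at this
    by_contra hc
    push_neg at hc
    rw [if_neg (by omega)] at this
    omega
  · intro t
    have := main t
    rw [hfloor_div t]
    constructor
    · split_ifs at this <;> omega
    · constructor
      · intro h
        by_contra hc
        rw [if_neg hc] at this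
        omega
      · intro h
        rw [if_pos h] at this
        omega
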